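/- Let p be a prime and f(x) an irreducible primitive polynomial of degree n ≥ 2 over the field 𝔽_p with nonzero constant term. Then for every k with 1 ≤ k ≤ ⌊n/2⌋ and every choice of k roots of f with distinct indices in an algebraic closure of 𝔽_p, the product of those roots is not equal to 1. -/

import Mathlib

open Polynomial

/-- `f` is `k`-regular over `K`: no product of `k` roots of `f` (with distinct
indices, counting multiplicity) in an algebraic closure of `K` equals `1`. -/
def kRegular (K : Type*) [Field K] (f : Polynomial K) (k : ℕ) : Prop :=
  ∀ s : Multiset (AlgebraicClosure K),
    s ≤ (f.map (algebraMap K (AlgebraicClosure K))).roots →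
    Multiset.card s = k → s.prod ≠ 1

theorem regular_of_irreducible_primitive (p : ℕ) [Fact p.Prime]
    (f : Polynomial (ZMod p)) (n : ℕ) (hn : f.natDegree = n) (h2 : 2 ≤ n)
    (hirr : Irreducible f) (hc : f.coeff 0 ≠ 0)
    (hprim : ∀ x : AlgebraicClosure (ZMod p),
      (f.map (algebraMap (ZMod p) (AlgebraicClosure (ZMod p)))).IsRoot x →
      orderOf x = p ^ n - 1) :
    ∀ k, 1 ≤ k → k ≤ n / 2 → kRegular (ZMod p) f k := by
  classical
  intro k hk1 hk2 s hs hcard hprod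
  set g := f.map (algebraMap (ZMod p) (AlgebraicClosure (ZMod p))) with hg
  have hp := (Fact.out : p.Prime)
  have hp2 : 2 ≤ p := hp.two_le
  have hne : f ≠ 0 := hirr.ne_zero
  have hgne : g ≠ 0 :=
    (Polynomial.map_ne_zero_iff (algebraMap (ZMod p) (AlgebraicClosure (ZMod p))).injective).2 hne
  have hgdeg : g.natDegree = n := by rw [hg, natDegree_map, hn]
  have hpn1 : 1 < p ^ n := Nat.one_lt_pow (by omega) (by omega)
  -- Frobenius maps roots to roots
  have hmapfrob : g.map (frobenius (AlgebraicClosure (ZMod p)) p) = g := by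
    ext m
    rw [coeff_map, hg, coeff_map, frobenius_def, ← map_pow, ZMod.pow_card]
  have hfrob : ∀ x : AlgebraicClosure (ZMod p), g.IsRoot x → g.IsRoot (x ^ p) := by
    intro x hx
    have : g.eval (x ^ p) = (g.eval x) ^ p := by
      conv_lhs => rw [← hmapfrob]
      rw [eval_map, show x ^ p = frobenius (AlgebraicClosure (ZMod p)) p x from rfl,
        eval₂_at_apply, frobenius_def]
    rw [IsRoot, this, hx.eq_zero, zero_pow hp.ne_zero]
  -- pick a root α from s
  obtain ⟨α, hα⟩ : ∃ α, α ∈ s := Multiset.card_pos_iff_exists_mem.1 (by omega)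
  have hαroot : g.IsRoot α := isRoot_of_mem_roots (Multiset.mem_of_le hs hα)
  have hord : orderOf α = p ^ n - 1 := hprim α hαroot
  have hα0 : α ≠ 0 := by
    rintro rfl
    have h0 : g.coeff 0 = 0 := by
      have := hαroot.eq_zero
      rwa [← coeff_zero_eq_eval_zero] at this
    rw [hg, coeff_map] at h0
    exact hc ((map_eq_zero_iff _ (algebraMap (ZMod p) (AlgebraicClosure (ZMod p))).injective).1 h0)
  -- all powers α ^ p ^ i are roots
  have hpowroot : ∀ i, g.IsRoot (α ^ p ^ i) := by
    intro i
    induction i with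
    | zero => simpa using hαroot
    | succ i ih =>
      have := hfrob _ ih
      rwa [← pow_mul, ← pow_succ] at this
  -- powers are injective on range n
  have hinj : ∀ i < n, ∀ j < n, α ^ p ^ i = α ^ p ^ j → i = j := by
    have key : ∀ i j, i < j → j < n → α ^ p ^ i ≠ α ^ p ^ j := by
      intro i j hij hjn heq
      have hle : p ^ i ≤ p ^ j := Nat.pow_le_pow_right (by omega) (by omega)
      have : α ^ p ^ i * α ^ (p ^ j - p ^ i) = α ^ p ^ i * 1 := by
        rw [mul_one, ← pow_add, Nat.add_sub_cancel' hle]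
        exact heq.symm
      have h1 : α ^ (p ^ j - p ^ i) = 1 :=
        mul_left_cancel₀ (pow_ne_zero _ hα0) this
      have hdvd : (p ^ n - 1) ∣ (p ^ j - p ^ i) := hord ▸ orderOf_dvd_of_pow_eq_one h1
      have hlt1 : p ^ i < p ^ j := Nat.pow_lt_pow_right (by omega) hij
      have hlt2 : p ^ j < p ^ n - 1 := by
        have h3 : p ^ j ≤ p ^ (n - 1) := Nat.pow_le_pow_right (by omega) (by omega)
        have h4 : 2 * p ^ (n - 1) ≤ p * p ^ (n - 1) := Nat.mul_le_mul_right _ hp2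
        have h5 : p * p ^ (n - 1) = p ^ n := by
          rw [← pow_succ']
          congr 1
          omega
        have h6 : 2 ≤ p ^ (n - 1) :=
          le_trans hp2 (by calc p = p ^ 1 := (pow_one p).symm
            _ ≤ p ^ (n - 1) := Nat.pow_le_pow_right (by omega) (by omega))
        omega
      have := Nat.le_of_dvd (by omega) hdvd
      omega
    intro i hi j hj heq
    rcases lt_trichotomy i j with h | h | h
    · exact absurd heq (key i j h hj)
    · exact h
    · exact absurd heq.symm (key j i h hi)
  -- the multiset of all powers equals the roots
  set R : Multiset (AlgebraicClosure (ZMod p)) :=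
    (Multiset.range n).map (fun i => α ^ p ^ i) with hR
  have hRnodup : R.Nodup :=
    (Multiset.nodup_range n).map_on
      (fun i hi j hj => hinj i (Multiset.mem_range.1 hi) j (Multiset.mem_range.1 hj))
  have hRle : R ≤ g.roots := by
    rw [Multiset.le_iff_subset hRnodup]
    intro x hx
    obtain ⟨i, _, rfl⟩ := Multiset.mem_map.1 hx
    exact (mem_roots hgne).2 (hpowroot i)
  have hRcard : Multiset.card R = n := by simp [hR]
  have hRoots : g.roots = R := by
    refine (Multiset.eq_of_le_of_card_le hRle ?_).symm
    rw [hRcard]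
    exact hgdeg ▸ g.card_roots'
  -- s is a sub-multiset of R
  have hsle : s ≤ R := hRoots ▸ hs
  have hsnodup : s.Nodup := Multiset.nodup_of_le hsle hRnodup
  -- the index set
  set T : Finset ℕ := (Finset.range n).filter (fun i => α ^ p ^ i ∈ s) with hT
  have hTsub : T ⊆ Finset.range n := by rw [hT]; exact Finset.filter_subset _ _
  have hseq : s = T.val.map (fun i => α ^ p ^ i) := by
    have hTnodup : (T.val.map (fun i => α ^ p ^ i)).Nodup :=
      T.nodup.map_on (fun i hi j hj => by
        have hi' := Finset.mem_range.1 (hTsub (Finset.mem_val.mp hi))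
        have hj' := Finset.mem_range.1 (hTsub (Finset.mem_val.mp hj))
        exact hinj i hi' j hj')
    apply le_antisymm
    · rw [Multiset.le_iff_subset hsnodup]
      intro x hx
      obtain ⟨i, hi, rfl⟩ := Multiset.mem_map.1 (Multiset.mem_of_le hsle hx)
      exact Multiset.mem_map.2 ⟨i, Finset.mem_val.mpr (by
        rw [hT]
        exact Finset.mem_filter.2 ⟨Finset.mem_range.2 (Multiset.mem_range.1 hi), hx⟩), rfl⟩
    · rw [Multiset.le_iff_subset hTnodup]
      intro x hx
      obtain ⟨i, hi, rfl⟩ := Multiset.mem_map.1 hx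
      have : i ∈ T := Finset.mem_val.mp hi
      rw [hT] at this
      exact (Finset.mem_filter.1 this).2
  have hTcard : T.card = k := by
    have h := hcard
    rw [hseq, Multiset.card_map] at h
    exact h
  -- product as a power of α
  set m : ℕ := ∑ i ∈ T, p ^ i with hm
  have hprodeq : s.prod = α ^ m := by
    rw [hseq, hm, ← Finset.prod_pow_eq_pow_sum]
    rfl
  have hmpos : 0 < m := by
    obtain ⟨i, hi⟩ := Finset.card_pos.1 (by omega : 0 < T.card)
    exact lt_of_lt_of_le (pow_pos (by omega : 0 < p) i)
      (Finset.single_le_sum (fun _ _ => Nat.zero_le _) hi)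
  have hmlt : m < p ^ n - 1 := by
    have hTne : T ≠ Finset.range n := by
      intro h
      have := hTcard
      rw [h, Finset.card_range] at this
      omega
    obtain ⟨j, hjr, hjT⟩ : ∃ j ∈ Finset.range n, j ∉ T := by
      by_contra h
      push_neg at h
      exact hTne (Finset.Subset.antisymm hTsub h)
    have hins : p ^ j + m = ∑ i ∈ insert j T, p ^ i := (Finset.sum_insert hjT).symm
    have hlt : (∑ i ∈ insert j T, p ^ i) < p ^ n := by
      apply Nat.geomSum_lt hp2
      intro i hi
      rcases Finset.mem_insert.1 hi with h | h
      · exact Finset.mem_range.1 (h ▸ hjr)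
      · exact Finset.mem_range.1 (hTsub h)
    have hpj : 1 ≤ p ^ j := Nat.one_le_pow _ _ (by omega)
    omega
  -- contradiction
  have hdvd : orderOf α ∣ m := orderOf_dvd_of_pow_eq_one (hprodeq ▸ hprod)
  rw [hord] at hdvd
  have := Nat.le_of_dvd hmpos hdvd
  omega
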